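/- For indices i, j with j ≤ i, the real function f(t) = ℓ(μ, B(t), ν), where B(t) is B with its (i,j)-entry replaced by t, is twice differentiable at t = B_{ij} and its second derivative equals −𝟙_{i=j}/B_{ii}² − (ν + D)·r_j²·((ν + q) − 2·z_i²)/(ν + q)², where 𝟙_{i=j} is 1 if i = j and 0 otherwise, z_i = (B·r)_i and r_j = y_j − μ_j. -/

import Mathlib

open Matrix

/-- Multivariate t log-likelihood in the Cholesky precision parametrization `Ω = Bᵀ B`:
`ℓ(μ, B, ν) = log Γ((ν+D)/2) - log Γ(ν/2) - (D/2)·log ν - (D/2)·log π + log(det B)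
  - ((ν+D)/2)·log(1 + q/ν)` with `q = ‖B(y-μ)‖²`. -/
noncomputable def tCholLL (D : ℕ) (y μ : Fin D → ℝ)
    (B : Matrix (Fin D) (Fin D) ℝ) (ν : ℝ) : ℝ :=
  Real.log (Real.Gamma ((ν + D) / 2)) - Real.log (Real.Gamma (ν / 2))
    - ((D : ℝ) / 2) * Real.log ν - ((D : ℝ) / 2) * Real.log Real.pi
    + Real.log B.det
    - ((ν + D) / 2) * Real.log (1 + (∑ k, (B.mulVec (y - μ) k) ^ 2) / ν)

/-- The matrix `B` with its `(i,j)`-entry replaced by `t`. -/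
def updEntry {D : ℕ} (B : Matrix (Fin D) (Fin D) ℝ) (i j : Fin D) (t : ℝ) :
    Matrix (Fin D) (Fin D) ℝ :=
  Matrix.of fun k l => if k = i ∧ l = j then t else B k l

/-- Second partial derivative of the multivariate t log-likelihood with respect to the
entry `B_{ij}` (with `j ≤ i`): the map `t ↦ ℓ(μ, B(t), ν)` is twice differentiable at
`t = B i j` and its second derivative equals
`-𝟙_{i=j}/B_{ii}² - (ν + D)·r_j²·((ν + q) - 2·z_i²)/(ν + q)²` with `z = B(y-μ)`,
`r = y - μ` and `q = ‖B(y-μ)‖²`. -/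
theorem tChol_deriv2_B (D : ℕ) (hD : 1 ≤ D) (y μ : Fin D → ℝ) (ν : ℝ) (hν : 0 < ν)
    (B : Matrix (Fin D) (Fin D) ℝ)
    (hLT : ∀ k l : Fin D, k < l → B k l = 0)
    (hdiag : ∀ k, 0 < B k k) (i j : Fin D) (hji : j ≤ i) :
    (∀ᶠ t in nhds (B i j),
        DifferentiableAt ℝ (fun t : ℝ => tCholLL D y μ (updEntry B i j t) ν) t) ∧
      HasDerivAt (deriv (fun t : ℝ => tCholLL D y μ (updEntry B i j t) ν))
        (-(if i = j then ((B i i) ^ 2)⁻¹ else 0)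
          - (ν + D) * (y j - μ j) ^ 2 *
              ((ν + ∑ k, (B.mulVec (y - μ) k) ^ 2) - 2 * (B.mulVec (y - μ) i) ^ 2) /
            (ν + ∑ k, (B.mulVec (y - μ) k) ^ 2) ^ 2)
        (B i j) := by
  classical
  set f : ℝ → ℝ := fun t : ℝ => tCholLL D y μ (updEntry B i j t) ν with hf
  set E : ℝ := if i = j then ((B i i) ^ 2)⁻¹ else 0 with hE
  set b : ℝ := B i j with hb
  set rj : ℝ := y j - μ j with hrj
  set z : Fin D → ℝ := B.mulVec (y - μ) with hz
  set q : ℝ := ∑ k, z k ^ 2 with hq0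
  set s : ℝ := (ν + D) / 2 with hs
  set c : ℝ := 2 * z i * rj with hc
  set d : ℝ := rj ^ 2 with hd
  set Qe : ℝ → ℝ := fun t => (ν + q) + c * (t - b) + d * (t - b) ^ 2 with hQe
  -- mulVec of updated matrix
  have hmv : ∀ t k, (updEntry B i j t).mulVec (y - μ) k
      = z k + (if k = i then (t - b) * rj else 0) := by
    intro t k
    have step : ∀ l, (if k = i ∧ l = j then t else B k l) * (y - μ) l
        = B k l * (y - μ) l + (if k = i ∧ l = j then (t - b) * (y - μ) l else 0) := by
      intro l
      split_ifs with h
      · obtain ⟨hk, hl⟩ := h; subst hk; subst hl; rw [hb]; ring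
      · ring
    simp only [hz, Matrix.mulVec, dotProduct, updEntry, Matrix.of_apply]
    rw [Finset.sum_congr rfl (fun l _ => step l), Finset.sum_add_distrib]
    congr 1
    by_cases hk : k = i
    · subst hk
      simp only [true_and]
      rw [Finset.sum_ite_eq' Finset.univ j (fun l => (t - b) * (y - μ) l)]
      simp [hrj]
    · simp [hk]
  -- the quadratic form
  have hq : ∀ t, ν + ∑ k, ((updEntry B i j t).mulVec (y - μ) k) ^ 2 = Qe t := by
    intro t
    have expand : ∀ k, (z k + (if k = i then (t - b) * rj else 0)) ^ 2
        = z k ^ 2 + (if k = i then 2 * z k * ((t - b) * rj) + ((t - b) * rj) ^ 2 else 0) := by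
      intro k; split_ifs <;> ring
    simp only [hmv t]
    rw [Finset.sum_congr rfl (fun k _ => expand k), Finset.sum_add_distrib,
      Finset.sum_ite_eq' Finset.univ i
        (fun k => 2 * z k * ((t - b) * rj) + ((t - b) * rj) ^ 2)]
    simp only [Finset.mem_univ, if_true, hQe, hc, hd, ← hq0]
    ring
  have hQpos : ∀ t, 0 < Qe t := by
    intro t
    rw [← hq t]
    have : 0 ≤ ∑ k, ((updEntry B i j t).mulVec (y - μ) k) ^ 2 :=
      Finset.sum_nonneg fun k _ => sq_nonneg _
    linarith
  have hQne : (ν + q) ≠ 0 := by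
    have := hQpos b; simp only [hQe, sub_self, mul_zero, ne_eq] at this ⊢
    nlinarith
  -- determinant
  set P : ℝ := ∏ k ∈ Finset.univ.erase i, B k k with hP
  have hPpos : 0 < P := Finset.prod_pos fun k _ => hdiag k
  have hlow : ∀ t, (updEntry B i j t).BlockTriangular OrderDual.toDual := by
    intro t k l hkl
    simp only [OrderDual.toDual_lt_toDual] at hkl
    simp only [updEntry, Matrix.of_apply]
    rw [if_neg, hLT k l hkl]
    rintro ⟨rfl, rfl⟩
    exact absurd hkl (not_lt.2 hji)
  have hdet : ∀ t, (updEntry B i j t).det = if i = j then t * P else B.det := by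
    intro t
    rw [Matrix.det_of_lowerTriangular _ (hlow t)]
    by_cases hij : i = j
    · subst hij
      rw [if_pos rfl, ← Finset.mul_prod_erase Finset.univ _ (Finset.mem_univ i)]
      congr 1
      · simp [updEntry]
      · exact Finset.prod_congr rfl fun k hk => by
          simp [updEntry, Finset.mem_erase.1 hk |>.1]
    · rw [if_neg hij, Matrix.det_of_lowerTriangular B]
      · exact Finset.prod_congr rfl fun k _ => by
          simp only [updEntry, Matrix.of_apply]
          rw [if_neg]; rintro ⟨rfl, rfl⟩; exact hij rfl
      · intro k l hkl
        exact hLT k l (by simpa using hkl)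
  set e : ℝ := if i = j then (1 : ℝ) else 0 with he
  set K : ℝ := Real.log (Real.Gamma ((ν + D) / 2)) - Real.log (Real.Gamma (ν / 2))
    - ((D : ℝ) / 2) * Real.log ν - ((D : ℝ) / 2) * Real.log Real.pi
    + (if i = j then Real.log P else Real.log B.det) + s * Real.log ν with hK
  set g : ℝ → ℝ := fun t => K + e * Real.log t - s * Real.log (Qe t) with hg
  set g1 : ℝ → ℝ := fun t => e / t - s * ((c + 2 * d * (t - b)) / Qe t) with hg1
  have ht0 : ∀ᶠ t in nhds b, (i = j → 0 < t) := by
    by_cases hij : i = j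
    · have hbpos : 0 < b := by
        rw [hb, show B i j = B i i by rw [hij]]
        exact hdiag i
      exact (lt_mem_nhds hbpos).mono fun t ht _ => ht
    · exact Filter.Eventually.of_forall fun t h => absurd h hij
  have hfg : ∀ᶠ t in nhds b, f t = g t := by
    filter_upwards [ht0] with t ht
    have hlogq : Real.log (1 + (∑ k, ((updEntry B i j t).mulVec (y - μ) k) ^ 2) / ν)
        = Real.log (Qe t) - Real.log ν := by
      have h1 : (1 : ℝ) + (∑ k, ((updEntry B i j t).mulVec (y - μ) k) ^ 2) / ν
          = Qe t / ν := by
        rw [← hq t]; field_simp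
      rw [h1, Real.log_div (ne_of_gt (hQpos t)) (ne_of_gt hν)]
    have hlogd : Real.log ((updEntry B i j t).det)
        = e * Real.log t + (if i = j then Real.log P else Real.log B.det) := by
      rw [hdet t]
      by_cases hij : i = j
      · rw [if_pos hij, if_pos hij,
          Real.log_mul (ne_of_gt (ht hij)) (ne_of_gt hPpos), he, if_pos hij, one_mul]
      · simp [hij, he]
    simp only [hf, tCholLL, hg, hK]
    rw [hlogq, hlogd]
    ring
  have hgd : ∀ᶠ t in nhds b, HasDerivAt g (g1 t) t := by
    filter_upwards [ht0] with t ht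
    have hlog : HasDerivAt (fun u : ℝ => e * Real.log u) (e / t) t := by
      by_cases hij : i = j
      · have := (Real.hasDerivAt_log (ne_of_gt (ht hij))).const_mul e
        simpa [div_eq_mul_inv] using this
      · simp only [he, if_neg hij, zero_mul, zero_div]
        exact hasDerivAt_const t 0
    have hQd : HasDerivAt Qe (c + 2 * d * (t - b)) t := by
      have hu : HasDerivAt (fun u : ℝ => u - b) 1 t := (hasDerivAt_id t).sub_const b
      have h2 := ((hu.const_mul c).const_add (ν + q)).add ((hu.pow 2).const_mul d)
      refine h2.congr_deriv ?_
      push_cast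
      ring
    have hlogQ := (hQd.log (ne_of_gt (hQpos t))).const_mul s
    have := (hlog.const_add K).sub hlogQ
    exact this
  refine ⟨?_, ?_⟩
  · filter_upwards [hfg.eventually_nhds, hgd] with t hft hgt
    exact hgt.differentiableAt.congr_of_eventuallyEq hft
  · have hfg' : f =ᶠ[nhds b] g := hfg
    have hdf : deriv f =ᶠ[nhds b] g1 :=
      (Filter.EventuallyEq.deriv hfg').trans (hgd.mono fun t ht => ht.deriv)
    have hQb : Qe b = ν + q := by simp [hQe]
    have hE' : HasDerivAt (fun t : ℝ => e / t) (-E) b := by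
      by_cases hij : i = j
      · have hbpos : 0 < b := by
          rw [hb, show B i j = B i i by rw [hij]]
          exact hdiag i
        have := (hasDerivAt_inv (ne_of_gt hbpos)).const_mul e
        have hbi : b = B i i := by rw [hb, hij]
        simp only [he, if_pos hij, one_mul, hE, div_eq_mul_inv] at this ⊢
        refine this.congr_deriv ?_
        rw [hbi]
      · simp only [he, if_neg hij, zero_div, hE, neg_zero]
        exact hasDerivAt_const b 0
    have hN : HasDerivAt (fun t : ℝ => c + 2 * d * (t - b)) (2 * d) b := by
      have hu : HasDerivAt (fun u : ℝ => u - b) 1 b := (hasDerivAt_id b).sub_const b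
      simpa using (hu.const_mul (2 * d)).const_add c
    have hQd : HasDerivAt Qe c b := by
      have hu : HasDerivAt (fun u : ℝ => u - b) 1 b := (hasDerivAt_id b).sub_const b
      have h2 := ((hu.const_mul c).const_add (ν + q)).add ((hu.pow 2).const_mul d)
      refine h2.congr_deriv ?_
      push_cast
      ring
    have hdiv := (hN.div hQd (ne_of_gt (hQpos b))).const_mul s
    have hg1d := hE'.sub hdiv
    have hval : -E - s * ((2 * d * Qe b - (c + 2 * d * (b - b)) * c) / Qe b ^ 2)
        = -E - (ν + ↑D) * d * ((ν + q) - 2 * z i ^ 2) / (ν + q) ^ 2 := by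
      rw [hQb]
      congr 1
      rw [hs, hc, hd]
      field_simp
      ring
    rw [hval] at hg1d
    exact hg1d.congr_of_eventuallyEq hdf
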